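/- Let $\phi : \mathbb{T} \to (0,1)$ and $g : \mathbb{T} \to \mathbb{R}$ be continuous, and let $\{a_N\}$ be a positive sequence with $a_N/N \to 0$ and $\sqrt{N}/a_N \to 0$. For $N$ large enough that $0 < \phi(x/N) + \frac{a_N}{N} g(x/N) < 1$ for all $x$, let $\{\eta^N(x)\}_{x \in \mathbb{T}^N}$ be independent $\{0,1\}$-valued random variables with $P(\eta^N(x) = 1) = \phi(x/N) + \frac{a_N}{N} g(x/N)$, and define the log-likelihood ratio $R_N = \sum_{x \in \mathbb{T}^N}\Big[\eta^N(x)\log\frac{\phi(x/N)}{\phi(x/N) + \frac{a_N}{N}g(x/N)} + (1-\eta^N(x))\log\frac{1-\phi(x/N)}{1-\phi(x/N) - \frac{a_N}{N}g(x/N)}\Big]$. Then $\frac{N}{a_N^2} R_N$ converges in probability to $-\frac{1}{2}\int_{\mathbb{T}} \frac{g^2(u)}{\phi(u)(1-\phi(u))}\,du$ as $N \to \infty$. -/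

import Mathlib

open MeasureTheory ProbabilityTheory Filter

lemma log_lin_bound {x : ℝ} (h : |x| ≤ 1/2) : |Real.log (1+x)| ≤ 2*|x| := by
  have h1 : |(-x)| < 1 := by rw [abs_neg]; linarith [abs_nonneg x]
  have key := Real.abs_log_sub_add_sum_range_le h1 1
  simp only [Finset.range_one, Finset.sum_singleton, Nat.cast_zero, zero_add, pow_one, div_one,
    sub_neg_eq_add, abs_neg] at key
  norm_num at key
  -- key : |(-x) + Real.log (1 + x)| ≤ |x|^2/(1-|x|)
  have h0 : (0:ℝ) < 1 - |x| := by linarith [abs_nonneg x]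
  have h3 : x ^ 2 / (1 - |x|) ≤ 2 * |x|^2 := by
    rw [← sq_abs x, div_le_iff₀ h0]
    nlinarith [sq_nonneg (|x|), mul_nonneg (sq_nonneg (|x|)) (by linarith : (0:ℝ) ≤ 1 - 2*|x|)]
  have h4 : |Real.log (1+x) - x| ≤ 2*|x|^2 := by
    have he : Real.log (1+x) - x = -x + Real.log (1+x) := by ring
    rw [he]; exact key.trans h3
  have h5 : |Real.log (1+x)| ≤ |Real.log (1+x) - x| + |x| := by
    calc |Real.log (1+x)| = |(Real.log (1+x) - x) + x| := by ring_nf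
      _ ≤ |Real.log (1+x) - x| + |x| := abs_add_le _ _
  nlinarith [abs_nonneg x, sq_abs x, sq_nonneg (|x|)]

lemma log_quad_bound {x : ℝ} (h : |x| ≤ 1/2) :
    |Real.log (1+x) - x + x^2/2| ≤ 2*|x|^3 := by
  have h1 : |(-x)| < 1 := by rw [abs_neg]; linarith [abs_nonneg x]
  have key := Real.abs_log_sub_add_sum_range_le h1 2
  have hsum : ∑ i ∈ Finset.range 2, (-x) ^ (i + 1) / ((i:ℝ) + 1) = -x + x^2/2 := by
    simp [Finset.sum_range_succ]; ring
  rw [hsum, abs_neg, sub_neg_eq_add] at key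
  have heq : (-x + x^2/2) + Real.log (1 + x) = Real.log (1+x) - x + x^2/2 := by ring
  rw [heq] at key
  norm_num at key
  have h0 : (0:ℝ) < 1 - |x| := by linarith [abs_nonneg x]
  have h2 : |x|^3 / (1 - |x|) ≤ 2*|x|^3 := by
    rw [div_le_iff₀ h0]
    nlinarith [pow_nonneg (abs_nonneg x) 3,
      mul_nonneg (pow_nonneg (abs_nonneg x) 3) (by linarith : (0:ℝ) ≤ 1 - 2*|x|)]
  linarith

set_option maxHeartbeats 1000000 in
lemma per_site_bounds {c φ₀ t : ℝ} (hc : 0 < c) (hc2 : c ≤ 1/2)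
    (h1 : c ≤ φ₀) (h2 : φ₀ ≤ 1 - c) (ht : |t| ≤ c/2) :
    |Real.log (φ₀ / (φ₀ + t)) - Real.log ((1 - φ₀) / (1 - φ₀ - t))| ≤ 4/c * |t| ∧
    |(φ₀ + t) * Real.log (φ₀ / (φ₀ + t)) + (1 - φ₀ - t) * Real.log ((1 - φ₀) / (1 - φ₀ - t))
        + t^2 / (2 * (φ₀ * (1 - φ₀)))| ≤ 5/c^3 * |t|^3 := by
  have hφ0 : 0 < φ₀ := lt_of_lt_of_le hc h1
  have h1φ : 0 < 1 - φ₀ := by linarith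
  have htc : -(c/2) ≤ t ∧ t ≤ c/2 := abs_le.mp ht
  have hpt : 0 < φ₀ + t := by linarith [htc.1]
  have hpt1 : 0 < 1 - φ₀ - t := by linarith [htc.2]
  set x₁ : ℝ := t / φ₀ with hx₁def
  set x₂ : ℝ := -t / (1 - φ₀) with hx₂def
  have hx₁abs : |x₁| ≤ 1/2 := by
    rw [hx₁def, abs_div, abs_of_pos hφ0, div_le_iff₀ hφ0]
    calc |t| ≤ c/2 := ht
      _ ≤ 1/2 * φ₀ := by linarith
  have hx₂abs : |x₂| ≤ 1/2 := by
    rw [hx₂def, abs_div, abs_neg, abs_of_pos h1φ, div_le_iff₀ h1φ]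
    calc |t| ≤ c/2 := ht
      _ ≤ 1/2 * (1 - φ₀) := by linarith
  have hx₁c : |x₁| ≤ |t| / c := by
    rw [hx₁def, abs_div, abs_of_pos hφ0]
    exact div_le_div_of_nonneg_left (abs_nonneg t) hc h1
  have hx₂c : |x₂| ≤ |t| / c := by
    rw [hx₂def, abs_div, abs_neg, abs_of_pos h1φ]
    exact div_le_div_of_nonneg_left (abs_nonneg t) hc (by linarith)
  have hx1e : 1 + x₁ = (φ₀ + t)/φ₀ := by rw [hx₁def]; field_simp
  have hx2e : 1 + x₂ = (1 - φ₀ - t)/(1 - φ₀) := by rw [hx₂def]; field_simp; ring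
  have hA : Real.log (φ₀ / (φ₀ + t)) = -Real.log (1 + x₁) := by
    rw [show φ₀ / (φ₀ + t) = (1 + x₁)⁻¹ by rw [hx1e, inv_div], Real.log_inv]
  have hB : Real.log ((1 - φ₀) / (1 - φ₀ - t)) = -Real.log (1 + x₂) := by
    rw [show (1 - φ₀) / (1 - φ₀ - t) = (1 + x₂)⁻¹ by rw [hx2e, inv_div], Real.log_inv]
  constructor
  · rw [hA, hB]
    have b1 := log_lin_bound hx₁abs
    have b2 := log_lin_bound hx₂abs
    have : |(-Real.log (1+x₁)) - (-Real.log (1+x₂))| ≤ |Real.log (1+x₁)| + |Real.log (1+x₂)| := by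
      calc |(-Real.log (1+x₁)) - (-Real.log (1+x₂))|
          ≤ |(-Real.log (1+x₁))| + |(-Real.log (1+x₂))| := abs_sub _ _
        _ = |Real.log (1+x₁)| + |Real.log (1+x₂)| := by rw [abs_neg, abs_neg]
    have hc' : 2*|x₁| + 2*|x₂| ≤ 4/c * |t| := by
      have e1 : 2*|x₁| ≤ 2*(|t|/c) := by linarith
      have e2 : 2*|x₂| ≤ 2*(|t|/c) := by linarith
      calc 2*|x₁| + 2*|x₂| ≤ 4*(|t|/c) := by linarith
        _ = 4/c * |t| := by ring
    linarith
  · set e₁ : ℝ := Real.log (1 + x₁) - x₁ + x₁^2/2 with he₁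
    set e₂ : ℝ := Real.log (1 + x₂) - x₂ + x₂^2/2 with he₂
    have b1 : |e₁| ≤ 2*|t|^3/c^3 := by
      refine (log_quad_bound hx₁abs).trans ?_
      have : |x₁|^3 ≤ (|t|/c)^3 := pow_le_pow_left₀ (abs_nonneg _) hx₁c 3
      rw [div_pow] at this
      rw [mul_div_assoc]
      linarith
    have b2 : |e₂| ≤ 2*|t|^3/c^3 := by
      refine (log_quad_bound hx₂abs).trans ?_
      have : |x₂|^3 ≤ (|t|/c)^3 := pow_le_pow_left₀ (abs_nonneg _) hx₂c 3
      rw [div_pow] at this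
      rw [mul_div_assoc]
      linarith
    have hlog1 : Real.log (1 + x₁) = x₁ - x₁^2/2 + e₁ := by rw [he₁]; ring
    have hlog2 : Real.log (1 + x₂) = x₂ - x₂^2/2 + e₂ := by rw [he₂]; ring
    rw [hA, hB, hlog1, hlog2]
    have key : (φ₀ + t) * (-(x₁ - x₁^2/2 + e₁)) + (1 - φ₀ - t) * (-(x₂ - x₂^2/2 + e₂))
        + t^2 / (2 * (φ₀ * (1 - φ₀)))
        = -((φ₀+t)*e₁) - ((1-φ₀-t)*e₂) - t^3 * (1/(2*(1-φ₀)^2) - 1/(2*φ₀^2)) := by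
      rw [hx₁def, hx₂def]
      field_simp
      ring
    rw [key]
    have habs : |(-((φ₀+t)*e₁)) - ((1-φ₀-t)*e₂) - t^3 * (1/(2*(1-φ₀)^2) - 1/(2*φ₀^2))|
        ≤ |(φ₀+t)*e₁| + |(1-φ₀-t)*e₂| + |t^3 * (1/(2*(1-φ₀)^2) - 1/(2*φ₀^2))| := by
      calc |(-((φ₀+t)*e₁)) - ((1-φ₀-t)*e₂) - t^3 * (1/(2*(1-φ₀)^2) - 1/(2*φ₀^2))|
          ≤ |(-((φ₀+t)*e₁)) - ((1-φ₀-t)*e₂)| + |t^3 * (1/(2*(1-φ₀)^2) - 1/(2*φ₀^2))| :=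
            abs_sub _ _
        _ ≤ |(-((φ₀+t)*e₁))| + |(1-φ₀-t)*e₂| + |t^3 * (1/(2*(1-φ₀)^2) - 1/(2*φ₀^2))| := by
            linarith [abs_sub (-((φ₀+t)*e₁)) ((1-φ₀-t)*e₂)]
        _ = |(φ₀+t)*e₁| + |(1-φ₀-t)*e₂| + |t^3 * (1/(2*(1-φ₀)^2) - 1/(2*φ₀^2))| := by
            rw [abs_neg]
    refine habs.trans ?_
    have hp1 : |φ₀ + t| ≤ 1 := by rw [abs_of_pos hpt]; linarith [htc.2]
    have hp2 : |1 - φ₀ - t| ≤ 1 := by rw [abs_of_pos hpt1]; linarith [htc.1]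
    have t1 : |(φ₀+t)*e₁| ≤ 2*|t|^3/c^3 := by
      rw [abs_mul]
      calc |φ₀+t| * |e₁| ≤ 1 * |e₁| := by
            apply mul_le_mul_of_nonneg_right hp1 (abs_nonneg _)
        _ = |e₁| := one_mul _
        _ ≤ 2*|t|^3/c^3 := b1
    have t2 : |(1-φ₀-t)*e₂| ≤ 2*|t|^3/c^3 := by
      rw [abs_mul]
      calc |1-φ₀-t| * |e₂| ≤ 1 * |e₂| := by
            apply mul_le_mul_of_nonneg_right hp2 (abs_nonneg _)
        _ = |e₂| := one_mul _
        _ ≤ 2*|t|^3/c^3 := b2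
    have t3 : |t^3 * (1/(2*(1-φ₀)^2) - 1/(2*φ₀^2))| ≤ |t|^3/c^3 := by
      rw [abs_mul, abs_pow]
      have hd : |1/(2*(1-φ₀)^2) - 1/(2*φ₀^2)| ≤ 1/c^3 := by
        have e1 : (0:ℝ) < 1/(2*(1-φ₀)^2) := by positivity
        have e2 : (0:ℝ) < 1/(2*φ₀^2) := by positivity
        have f1 : 1/(2*(1-φ₀)^2) ≤ 1/(2*c^2) := by
          apply one_div_le_one_div_of_le (by positivity)
          have : c^2 ≤ (1-φ₀)^2 := by nlinarith
          linarith
        have f2 : 1/(2*φ₀^2) ≤ 1/(2*c^2) := by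
          apply one_div_le_one_div_of_le (by positivity)
          have : c^2 ≤ φ₀^2 := by nlinarith
          linarith
        have f3 : 1/(2*c^2) ≤ 1/c^3 := by
          rw [div_le_div_iff₀ (by positivity) (by positivity)]
          nlinarith [sq_nonneg c]
        rw [abs_sub_le_iff]
        constructor
        · linarith
        · linarith
      calc |t|^3 * |1/(2*(1-φ₀)^2) - 1/(2*φ₀^2)| ≤ |t|^3 * (1/c^3) := by
            apply mul_le_mul_of_nonneg_left hd (by positivity)
        _ = |t|^3/c^3 := by ring
    calc |(φ₀+t)*e₁| + |(1-φ₀-t)*e₂| + |t^3 * (1/(2*(1-φ₀)^2) - 1/(2*φ₀^2))|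
        ≤ 2*|t|^3/c^3 + 2*|t|^3/c^3 + |t|^3/c^3 := by linarith
      _ = 5/c^3 * |t|^3 := by ring

lemma variance_affine {Ω : Type*} [MeasurableSpace Ω] (P : Measure Ω) [IsProbabilityMeasure P]
    (X : Ω → ℝ) (hX : Integrable X P) (b d : ℝ) :
    variance (fun ω => b * X ω + d) P = b^2 * variance X P := by
  have hμ : (∫ ω, (b * X ω + d) ∂P) = (∫ ω, b * X ω ∂P) + d := by
    rw [integral_add (hX.const_mul b) (integrable_const d), integral_const]
    simp
  have h1 : variance (fun ω => b * X ω + d) P = variance (fun ω => b * X ω) P := by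
    rw [variance, variance]
    congr 1
    rw [evariance, evariance]
    refine lintegral_congr fun ω => ?_
    have : b * X ω + d - ∫ ω', (b * X ω' + d) ∂P = b * X ω - ∫ ω', b * X ω' ∂P := by
      rw [hμ]; ring
    rw [this]
  rw [h1, variance_const_mul]

lemma bernoulli_exp {Ω : Type*} [MeasurableSpace Ω] (P : Measure Ω) [IsProbabilityMeasure P]
    (X : Ω → ℝ) (hm : Measurable X) (hv : ∀ ω, X ω = 0 ∨ X ω = 1) {p : ℝ} (hp0 : 0 ≤ p)
    (hP : P {ω | X ω = 1} = ENNReal.ofReal p) :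
    MemLp X 2 P ∧ (∫ ω, X ω ∂P) = p ∧ variance X P ≤ 1 := by
  have hbd : ∀ ω, ‖X ω‖ ≤ 1 := by
    intro ω; rcases hv ω with h | h <;> simp [h]
  have hmem : MemLp X 2 P :=
    MemLp.of_bound hm.aestronglyMeasurable 1 (Filter.Eventually.of_forall hbd)
  have hSm : MeasurableSet {ω | X ω = 1} := hm (measurableSet_singleton 1)
  have hind : X = Set.indicator {ω | X ω = 1} (fun _ => (1:ℝ)) := by
    funext ω
    rcases hv ω with h | h
    · rw [h, Set.indicator_of_notMem]
      simp only [Set.mem_setOf_eq, h]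
      norm_num
    · rw [h, Set.indicator_of_mem]
      exact h
  have hE : (∫ ω, X ω ∂P) = p := by
    conv_lhs => rw [hind]
    rw [integral_indicator_const _ hSm, measureReal_def, hP, smul_eq_mul, mul_one, ENNReal.toReal_ofReal hp0]
  refine ⟨hmem, hE, ?_⟩
  have hsq : X ^ 2 = X := by
    funext ω; rcases hv ω with h | h <;> simp [h]
  have hp1 : p ≤ 1 := by
    have h1 : P {ω | X ω = 1} ≤ 1 := prob_le_one
    rw [hP] at h1
    have := ENNReal.toReal_mono (by simp) h1
    rwa [ENNReal.toReal_ofReal hp0, ENNReal.toReal_one] at this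
  calc variance X P ≤ ∫ ω, (X ^ 2) ω ∂P := variance_le_expectation_sq hm.aestronglyMeasurable
    _ = p := by rw [hsq]; exact hE
    _ ≤ 1 := hp1

lemma riemann_sum_tendsto (f : ℝ → ℝ) (hf : Continuous f) :
    Tendsto (fun N : ℕ => (∑ i ∈ Finset.range N, f (i / N)) / N) atTop
      (nhds (∫ u in (0:ℝ)..1, f u)) := by
  rw [Metric.tendsto_atTop]
  intro ε hε
  have hK : IsCompact (Set.Icc (0:ℝ) 1) := isCompact_Icc
  have huc : UniformContinuousOn f (Set.Icc 0 1) :=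
    hK.uniformContinuousOn_of_continuous (hf.continuousOn)
  rw [Metric.uniformContinuousOn_iff] at huc
  obtain ⟨δ, hδ, hδ'⟩ := huc (ε/2) (by linarith)
  obtain ⟨N₀, hN₀⟩ := exists_nat_gt (1/δ)
  refine ⟨max N₀ 1, fun N hN => ?_⟩
  have hN1 : 1 ≤ N := le_trans (le_max_right _ _) hN
  have hNpos : (0:ℝ) < N := by exact_mod_cast hN1
  have hinv : 1/(N:ℝ) < δ := by
    rw [div_lt_iff₀ hNpos]
    have h1 : (N₀ : ℝ) ≤ N := by exact_mod_cast le_trans (le_max_left _ _) hN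
    have : 1/δ < (N:ℝ) := lt_of_lt_of_le hN₀ h1
    rw [div_lt_iff₀ hδ] at this
    linarith [mul_comm δ (N:ℝ)]
  -- decompose the integral
  have hii : ∀ k : ℕ, k < N → IntervalIntegrable f volume ((k:ℝ)/N) ((k+1:ℕ)/N) :=
    fun k _ => hf.intervalIntegrable _ _
  have hsplit : ∑ k ∈ Finset.range N, ∫ u in ((k:ℝ)/N)..(((k+1:ℕ):ℝ)/N), f u
      = ∫ u in (((0:ℕ):ℝ)/N)..(((N:ℕ):ℝ)/N), f u :=
    intervalIntegral.sum_integral_adjacent_intervals hii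
  have h0 : ((0:ℕ):ℝ)/N = 0 := by simp
  have h1 : ((N:ℕ):ℝ)/N = 1 := by field_simp
  rw [h0, h1] at hsplit
  have hint_eq : (∫ u in (0:ℝ)..1, f u) = ∑ k ∈ Finset.range N, ∫ u in ((k:ℝ)/N)..((k+1:ℝ)/N), f u := by
    rw [← hsplit]
    apply Finset.sum_congr rfl
    intro k _
    norm_cast
  rw [Real.dist_eq, hint_eq]
  have hterm : ∀ k : ℕ, k ∈ Finset.range N →
      |f ((k:ℝ)/N)/N - ∫ u in ((k:ℝ)/N)..((k+1:ℝ)/N), f u| ≤ ε/2 * (1/N) := by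
    intro k hk
    rw [Finset.mem_range] at hk
    have hk1 : ((k:ℝ)+1)/N ≤ 1 := by
      rw [div_le_one hNpos]
      have : (k:ℝ) + 1 ≤ N := by exact_mod_cast Nat.succ_le_of_lt hk
      linarith
    have hk0 : (0:ℝ) ≤ (k:ℝ)/N := by positivity
    have hle : (k:ℝ)/N ≤ ((k:ℝ)+1)/N := by
      gcongr <;> linarith
    have hconst : f ((k:ℝ)/N)/N = ∫ _u in ((k:ℝ)/N)..((k+1:ℝ)/N), f ((k:ℝ)/N) := by
      rw [intervalIntegral.integral_const, smul_eq_mul]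
      have : ((k:ℝ)+1)/N - (k:ℝ)/N = 1/N := by field_simp; ring
      rw [this]; ring
    rw [hconst, ← intervalIntegral.integral_sub (intervalIntegrable_const) (hf.intervalIntegrable _ _)]
    have hbound : ∀ u ∈ Set.uIoc ((k:ℝ)/N) (((k:ℝ)+1)/N), ‖f ((k:ℝ)/N) - f u‖ ≤ ε/2 := by
      intro u hu
      rw [Set.uIoc_of_le hle] at hu
      have hu1 : u ∈ Set.Icc (0:ℝ) 1 := ⟨le_trans hk0 (le_of_lt hu.1), le_trans hu.2 hk1⟩
      have hx1 : (k:ℝ)/N ∈ Set.Icc (0:ℝ) 1 := ⟨hk0, le_trans hle hk1⟩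
      have hdist : dist ((k:ℝ)/N) u < δ := by
        rw [Real.dist_eq, abs_sub_comm, abs_of_nonneg (by linarith [hu.1] : (0:ℝ) ≤ u - (k:ℝ)/N)]
        have : u - (k:ℝ)/N ≤ 1/N := by
          have := hu.2
          have heq : ((k:ℝ)+1)/N - (k:ℝ)/N = 1/N := by field_simp; ring
          linarith
        linarith
      have := hδ' _ hx1 _ hu1 hdist
      rw [Real.dist_eq] at this
      exact le_of_lt this
    have := intervalIntegral.norm_integral_le_of_norm_le_const hbound
    rw [Real.norm_eq_abs] at this
    refine this.trans ?_
    have : |((k:ℝ)+1)/N - (k:ℝ)/N| = 1/N := by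
      rw [show ((k:ℝ)+1)/N - (k:ℝ)/N = 1/N by field_simp; ring]
      exact abs_of_pos (by positivity)
    rw [this]
  calc |(∑ i ∈ Finset.range N, f (i / N)) / N - ∑ k ∈ Finset.range N, ∫ u in ((k:ℝ)/N)..((k+1:ℝ)/N), f u|
      = |∑ k ∈ Finset.range N, (f ((k:ℝ)/N)/N - ∫ u in ((k:ℝ)/N)..((k+1:ℝ)/N), f u)| := by
        rw [Finset.sum_sub_distrib, Finset.sum_div]
    _ ≤ ∑ k ∈ Finset.range N, |f ((k:ℝ)/N)/N - ∫ u in ((k:ℝ)/N)..((k+1:ℝ)/N), f u| :=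
        Finset.abs_sum_le_sum_abs _ _
    _ ≤ ∑ _k ∈ Finset.range N, ε/2 * (1/N) := Finset.sum_le_sum hterm
    _ = ε/2 := by
        rw [Finset.sum_const, Finset.card_range, nsmul_eq_mul]
        field_simp
    _ < ε := by linarith

set_option maxHeartbeats 1000000 in
lemma main_estimates {Ω : Type*} [MeasurableSpace Ω] (P : Measure Ω) [IsProbabilityMeasure P]
    (c M : ℝ) (hc : 0 < c) (hc2 : c ≤ 1/2) (hM : 1 ≤ M)
    (φ g : ℝ → ℝ)
    (hcφ : ∀ u ∈ Set.Icc (0:ℝ) 1, c ≤ φ u ∧ φ u ≤ 1 - c)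
    (hMg : ∀ u ∈ Set.Icc (0:ℝ) 1, |g u| ≤ M)
    (N : ℕ) (hN1 : 1 ≤ N) (aN : ℝ) (haN : 0 < aN) (hreg : aN / N * M ≤ c/2)
    (η : Fin N → Ω → ℝ) (hmeas : ∀ x, Measurable (η x))
    (hval : ∀ x ω, η x ω = 0 ∨ η x ω = 1)
    (hind : iIndepFun η P)
    (hmarg : ∀ x : Fin N, φ (x / N) + aN / N * g (x / N) ∈ Set.Ioo (0:ℝ) 1 →
        P {ω | η x ω = 1} = ENNReal.ofReal (φ (x / N) + aN / N * g (x / N)))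
    (X : Ω → ℝ)
    (hX : ∀ ω, X ω = ((N:ℝ)/aN^2) * ∑ x : Fin N,
        (η x ω * Real.log (φ (x / N) / (φ (x / N) + aN / N * g (x / N)))
          + (1 - η x ω)
            * Real.log ((1 - φ (x / N)) / (1 - φ (x / N) - aN / N * g (x / N))))) :
    MemLp X 2 P ∧
    |(∫ ω, X ω ∂P) + (1/2) * ((∑ i ∈ Finset.range N,
        (g (i/N)^2/(φ (i/N)*(1-φ (i/N))))) / N)| ≤ 5*M^3/c^3 * (aN/N) ∧
    variance X P ≤ 16*M^2/c^2 * ((N:ℝ)/aN^2) := by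
  have hNpos : (0:ℝ) < N := by exact_mod_cast hN1
  have hNne : (N:ℝ) ≠ 0 := ne_of_gt hNpos
  have haNne : aN ≠ 0 := ne_of_gt haN
  have hcne : c ≠ 0 := ne_of_gt hc
  have hεN : 0 < aN / N := div_pos haN hNpos
  have hu : ∀ x : Fin N, ((x:ℝ)/N) ∈ Set.Icc (0:ℝ) 1 := by
    intro x
    constructor
    · positivity
    · rw [div_le_one hNpos]
      exact_mod_cast (le_of_lt x.isLt)
  set t : Fin N → ℝ := fun x => aN/N * g (x/N) with ht_def
  set A : Fin N → ℝ := fun x => Real.log (φ (x/N) / (φ (x/N) + t x)) with hA_def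
  set B : Fin N → ℝ := fun x => Real.log ((1 - φ (x/N)) / (1 - φ (x/N) - t x)) with hB_def
  set p : Fin N → ℝ := fun x => φ (x/N) + t x with hp_def
  have htabs : ∀ x, |t x| ≤ aN/N * M := by
    intro x
    rw [ht_def]
    simp only []
    rw [abs_mul, abs_of_pos hεN]
    exact mul_le_mul_of_nonneg_left (hMg _ (hu x)) (le_of_lt hεN)
  have htabs' : ∀ x, |t x| ≤ c/2 := fun x => (htabs x).trans hreg
  have hφx : ∀ x : Fin N, c ≤ φ (x/N) ∧ φ (x/N) ≤ 1 - c := fun x => hcφ _ (hu x)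
  have hps := fun x : Fin N =>
    per_site_bounds hc hc2 (hφx x).1 (hφx x).2 (htabs' x)
  have hpx : ∀ x, 0 < p x ∧ p x < 1 := by
    intro x
    have h1 := (hφx x).1
    have h2 := (hφx x).2
    have h3 := abs_le.mp (htabs' x)
    rw [hp_def]
    constructor
    · simp only []; linarith [h3.1]
    · simp only []; linarith [h3.2]
  have hmargx : ∀ x, P {ω | η x ω = 1} = ENNReal.ofReal (p x) :=
    fun x => hmarg x ⟨(hpx x).1, (hpx x).2⟩
  have hη := fun x : Fin N =>
    bernoulli_exp P (η x) (hmeas x) (hval x) (le_of_lt (hpx x).1) (hmargx x)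
  -- per-site random variables
  set Y : Fin N → Ω → ℝ := fun x => (fun y => (A x - B x) * y + B x) ∘ η x with hY_def
  have hYapp : ∀ x ω, Y x ω = (A x - B x) * η x ω + B x := fun x ω => rfl
  have hηint : ∀ x, Integrable (η x) P := fun x => (hη x).1.integrable one_le_two
  have hYmem : ∀ x, MemLp (Y x) 2 P := by
    intro x
    exact ((hη x).1.const_mul (A x - B x)).add (memLp_const (B x))
  have hYint : ∀ x, Integrable (Y x) P := fun x => (hYmem x).integrable one_le_two
  have hYE : ∀ x, ∫ ω, Y x ω ∂P = p x * A x + (1 - φ ((x:ℝ)/N) - t x) * B x := by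
    intro x
    simp only [hYapp]
    rw [integral_add ((hηint x).const_mul _) (integrable_const _), integral_const_mul,
      integral_const, probReal_univ, (hη x).2.1]
    simp only [ENNReal.toReal_one, smul_eq_mul, one_mul]
    rw [hp_def]
    simp only []
    ring
  have hYvar : ∀ x, variance (Y x) P ≤ (4/c * (aN/N*M))^2 := by
    intro x
    have h1 : variance (Y x) P = (A x - B x)^2 * variance (η x) P :=
      variance_affine P (η x) (hηint x) (A x - B x) (B x)
    rw [h1]
    have h2 : (A x - B x)^2 * variance (η x) P ≤ (A x - B x)^2 * 1 :=
      mul_le_mul_of_nonneg_left (hη x).2.2 (sq_nonneg _)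
    have h3 : (A x - B x)^2 ≤ (4/c * (aN/N*M))^2 := by
      rw [← sq_abs (A x - B x)]
      apply pow_le_pow_left₀ (abs_nonneg _)
      refine (hps x).1.trans ?_
      apply mul_le_mul_of_nonneg_left (htabs x)
      positivity
    linarith
  -- rewrite X
  set C : ℝ := (N:ℝ)/aN^2 with hC_def
  have hCpos : 0 < C := by rw [hC_def]; positivity
  set W : Ω → ℝ := fun ω => ∑ x : Fin N, Y x ω with hW_def
  have hXW : X = fun ω => C * W ω := by
    funext ω
    rw [hX ω, hW_def]
    simp only []
    congr 1
    apply Finset.sum_congr rfl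
    intro x _
    rw [hYapp, hA_def, hB_def, ht_def]
    simp only []
    ring
  have hWmem : MemLp W 2 P := by
    have := memLp_finset_sum' (μ := P) (p := 2) Finset.univ (fun (x : Fin N) _ => hYmem x)
    convert this using 1
    funext ω
    rw [hW_def, Finset.sum_apply]
  have hXmem : MemLp X 2 P := by rw [hXW]; exact hWmem.const_mul C
  have hWE : ∫ ω, W ω ∂P = ∑ x : Fin N, (p x * A x + (1 - φ ((x:ℝ)/N) - t x) * B x) := by
    rw [hW_def]
    rw [integral_finset_sum Finset.univ (fun x _ => hYint x)]
    exact Finset.sum_congr rfl fun x _ => hYE x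
  have hXE : ∫ ω, X ω ∂P
      = C * ∑ x : Fin N, (p x * A x + (1 - φ ((x:ℝ)/N) - t x) * B x) := by
    rw [hXW]
    show ∫ ω, C * W ω ∂P = _
    rw [integral_const_mul, hWE]
  -- variance bound
  have hWsum : W = ∑ x ∈ Finset.univ, Y x := by
    funext ω
    rw [hW_def, Finset.sum_apply]
  have hpair : Set.Pairwise ↑(Finset.univ : Finset (Fin N))
      fun i j => IndepFun (Y i) (Y j) P := by
    intro i _ j _ hij
    have hcomp := hind.comp (fun x => fun y => (A x - B x) * y + B x)
      (fun x => (measurable_id.const_mul _).add_const _)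
    exact hcomp.indepFun hij
  have hWvar : variance W P ≤ (N:ℝ) * (4/c * (aN/N*M))^2 := by
    rw [hWsum, IndepFun.variance_sum (fun x _ => hYmem x) hpair]
    calc ∑ x : Fin N, variance (Y x) P
        ≤ ∑ _x : Fin N, (4/c * (aN/N*M))^2 := Finset.sum_le_sum fun x _ => hYvar x
      _ = (N:ℝ) * (4/c * (aN/N*M))^2 := by
          rw [Finset.sum_const, Finset.card_univ, Fintype.card_fin, nsmul_eq_mul]
  have hXvar : variance X P ≤ 16*M^2/c^2 * ((N:ℝ)/aN^2) := by
    rw [hXW, variance_const_mul]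
    calc C^2 * variance W P ≤ C^2 * ((N:ℝ) * (4/c * (aN/N*M))^2) :=
          mul_le_mul_of_nonneg_left hWvar (sq_nonneg _)
      _ = 16*M^2/c^2 * ((N:ℝ)/aN^2) := by
          rw [hC_def]
          field_simp
          ring
  refine ⟨hXmem, ?_, hXvar⟩
  -- mean bound
  have hsum_eq : (∑ i ∈ Finset.range N, (g (i/N)^2/(φ (i/N)*(1-φ (i/N)))))
      = ∑ x : Fin N, (g ((x:ℝ)/N)^2/(φ ((x:ℝ)/N)*(1-φ ((x:ℝ)/N)))) :=
    (Fin.sum_univ_eq_sum_range (fun i : ℕ => g ((i:ℝ)/N)^2/(φ ((i:ℝ)/N)*(1-φ ((i:ℝ)/N)))) N).symm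
  have hφd : ∀ x : Fin N, φ ((x:ℝ)/N) * (1 - φ ((x:ℝ)/N)) ≠ 0 := by
    intro x
    have h1 := (hφx x).1
    have h2 := (hφx x).2
    have : 0 < φ ((x:ℝ)/N) * (1 - φ ((x:ℝ)/N)) := by nlinarith
    exact ne_of_gt this
  have hcomb : (∫ ω, X ω ∂P) + (1/2) * ((∑ i ∈ Finset.range N,
        (g (i/N)^2/(φ (i/N)*(1-φ (i/N))))) / N)
      = ∑ x : Fin N, (C * ((p x * A x + (1 - φ ((x:ℝ)/N) - t x) * B x)
          + (t x)^2 / (2 * (φ ((x:ℝ)/N) * (1 - φ ((x:ℝ)/N)))))) := by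
    rw [hXE, hsum_eq, Finset.sum_div, Finset.mul_sum, Finset.mul_sum, ← Finset.sum_add_distrib]
    apply Finset.sum_congr rfl
    intro x _
    have hd := hφd x
    have h2 : C * ((t x)^2/(2*(φ ((x:ℝ)/N)*(1-φ ((x:ℝ)/N)))))
        = 1/2 * (g ((x:ℝ)/N)^2/(φ ((x:ℝ)/N)*(1-φ ((x:ℝ)/N))) / N) := by
      rw [ht_def, hC_def]
      simp only []
      field_simp
    rw [← h2]
    ring
  rw [hcomb]
  have hterm : ∀ x : Fin N, |C * ((p x * A x + (1 - φ ((x:ℝ)/N) - t x) * B x)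
      + (t x)^2 / (2 * (φ ((x:ℝ)/N) * (1 - φ ((x:ℝ)/N)))))|
      ≤ C * (5/c^3 * (aN/N*M)^3) := by
    intro x
    rw [abs_mul, abs_of_pos hCpos]
    apply mul_le_mul_of_nonneg_left ?_ (le_of_lt hCpos)
    have h1 := (hps x).2
    have hform : (p x * A x + (1 - φ ((x:ℝ)/N) - t x) * B x)
        + (t x)^2 / (2 * (φ ((x:ℝ)/N) * (1 - φ ((x:ℝ)/N))))
        = (φ ((x:ℝ)/N) + t x) * A x + (1 - φ ((x:ℝ)/N) - t x) * B x
          + (t x)^2 / (2 * (φ ((x:ℝ)/N) * (1 - φ ((x:ℝ)/N)))) := by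
      rw [hp_def]
    rw [hform]
    refine h1.trans ?_
    have h2 : |t x|^3 ≤ (aN/N*M)^3 := pow_le_pow_left₀ (abs_nonneg _) (htabs x) 3
    apply mul_le_mul_of_nonneg_left h2
    positivity
  calc |∑ x : Fin N, (C * ((p x * A x + (1 - φ ((x:ℝ)/N) - t x) * B x)
          + (t x)^2 / (2 * (φ ((x:ℝ)/N) * (1 - φ ((x:ℝ)/N))))))|
      ≤ ∑ x : Fin N, |C * ((p x * A x + (1 - φ ((x:ℝ)/N) - t x) * B x)
          + (t x)^2 / (2 * (φ ((x:ℝ)/N) * (1 - φ ((x:ℝ)/N)))))| :=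
        Finset.abs_sum_le_sum_abs _ _
    _ ≤ ∑ _x : Fin N, C * (5/c^3 * (aN/N*M)^3) := Finset.sum_le_sum fun x _ => hterm x
    _ = (N:ℝ) * (C * (5/c^3 * (aN/N*M)^3)) := by
        rw [Finset.sum_const, Finset.card_univ, Fintype.card_fin, nsmul_eq_mul]
    _ = 5*M^3/c^3 * (aN/N) := by
        rw [hC_def]
        field_simp

set_option maxHeartbeats 1000000 in
/-- convergence in probability of the scaled log-likelihood ratio between the
Bernoulli product measures with success probabilities `φ(x/N)` and
`φ(x/N) + (a_N/N) g(x/N)`, sampled under the perturbed measure: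
`(N/a_N²) R_N → -½ ∫ g²/(φ(1-φ))` in probability. -/
theorem loglikelihood_ratio_convergence
    {Ω : Type*} [MeasurableSpace Ω] (P : Measure Ω) [IsProbabilityMeasure P]
    (a : ℕ → ℝ) (ha : ∀ N, 0 < a N)
    (ha1 : Tendsto (fun N : ℕ => a N / (N : ℝ)) atTop (nhds 0))
    (ha2 : Tendsto (fun N : ℕ => Real.sqrt N / a N) atTop (nhds 0))
    (φ g : ℝ → ℝ) (hφc : Continuous φ) (hφp : Function.Periodic φ 1)
    (hφ : ∀ u, φ u ∈ Set.Ioo (0 : ℝ) 1) (hgc : Continuous g) (hgp : Function.Periodic g 1)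
    (η : (N : ℕ) → Fin N → Ω → ℝ)
    (hmeas : ∀ N x, Measurable (η N x))
    (hval : ∀ N x ω, η N x ω = 0 ∨ η N x ω = 1)
    (hind : ∀ N, iIndepFun (η N) P)
    (hmarg : ∀ N (x : Fin N),
      φ (x / N) + a N / N * g (x / N) ∈ Set.Ioo (0 : ℝ) 1 →
      P {ω | η N x ω = 1} = ENNReal.ofReal (φ (x / N) + a N / N * g (x / N)))
    (R : (N : ℕ) → Ω → ℝ)
    (hR : ∀ N ω, R N ω = ∑ x : Fin N,
      (η N x ω * Real.log (φ (x / N) / (φ (x / N) + a N / N * g (x / N)))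
        + (1 - η N x ω)
          * Real.log ((1 - φ (x / N)) / (1 - φ (x / N) - a N / N * g (x / N))))) :
    ∀ ε > (0 : ℝ),
      Tendsto (fun N : ℕ =>
          P {ω | ε ≤ |((N : ℝ) / (a N) ^ 2) * R N ω
            - (-(1 / 2) * ∫ u in (0:ℝ)..1, g u ^ 2 / (φ u * (1 - φ u)))|})
        atTop (nhds 0) := by
  intro ε hε
  -- constants
  have hK : IsCompact (Set.Icc (0:ℝ) 1) := isCompact_Icc
  have hne : (Set.Icc (0:ℝ) 1).Nonempty := ⟨0, by norm_num⟩
  obtain ⟨u₁, hu₁, hmin1⟩ := hK.exists_isMinOn hne hφc.continuousOn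
  obtain ⟨u₂, hu₂, hmin2⟩ := hK.exists_isMinOn hne
    ((continuous_const.sub hφc).continuousOn :
      ContinuousOn (fun v => 1 - φ v) (Set.Icc (0:ℝ) 1))
  obtain ⟨M₀, hM₀⟩ := hK.exists_bound_of_continuousOn hgc.continuousOn
  set c : ℝ := min (min (φ u₁) (1 - φ u₂)) (1/2) with hc_def
  have hc : 0 < c := lt_min (lt_min (hφ u₁).1 (by linarith [(hφ u₂).2])) one_half_pos
  have hc2 : c ≤ 1/2 := min_le_right _ _
  have hcφ : ∀ u ∈ Set.Icc (0:ℝ) 1, c ≤ φ u ∧ φ u ≤ 1 - c := by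
    intro u hu
    constructor
    · calc c ≤ min (φ u₁) (1 - φ u₂) := min_le_left _ _
        _ ≤ φ u₁ := min_le_left _ _
        _ ≤ φ u := isMinOn_iff.mp hmin1 u hu
    · have h2 : 1 - φ u₂ ≤ 1 - φ u := isMinOn_iff.mp hmin2 u hu
      have h3 : c ≤ 1 - φ u₂ := le_trans (min_le_left _ _) (min_le_right _ _)
      linarith
  set M : ℝ := max M₀ 1 with hM_def
  have hM : 1 ≤ M := le_max_right _ _
  have hM0 : 0 < M := lt_of_lt_of_le one_pos hM
  have hMg : ∀ u ∈ Set.Icc (0:ℝ) 1, |g u| ≤ M := by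
    intro u hu
    have := hM₀ u hu
    rw [Real.norm_eq_abs] at this
    exact this.trans (le_max_left _ _)
  -- Riemann sum
  have hφd : ∀ u : ℝ, φ u * (1 - φ u) ≠ 0 := by
    intro u
    have h1 := (hφ u).1
    have h2 := (hφ u).2
    have : 0 < φ u * (1 - φ u) := by nlinarith
    exact ne_of_gt this
  have hFc : Continuous (fun u => g u ^ 2 / (φ u * (1 - φ u))) :=
    (hgc.pow 2).div (hφc.mul (continuous_const.sub hφc)) hφd
  set I : ℝ := ∫ u in (0:ℝ)..1, g u ^ 2 / (φ u * (1 - φ u)) with hI_def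
  have hRiem : Tendsto (fun N : ℕ =>
      (∑ i ∈ Finset.range N, (g ((i:ℝ)/(N:ℝ))^2/(φ ((i:ℝ)/(N:ℝ))*(1-φ ((i:ℝ)/(N:ℝ)))))) / (N:ℝ))
      atTop (nhds I) :=
    riemann_sum_tendsto (fun u => g u ^ 2 / (φ u * (1 - φ u))) hFc
  -- regime
  have hreg : ∀ᶠ N : ℕ in atTop, 1 ≤ N ∧ a N / N * M ≤ c/2 := by
    have hball : ∀ᶠ N : ℕ in atTop, a N / N ∈ Metric.ball (0:ℝ) (c/2/M) :=
      ha1 (Metric.ball_mem_nhds 0 (by positivity))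
    filter_upwards [hball, eventually_ge_atTop 1] with N hb hN1
    refine ⟨hN1, ?_⟩
    rw [Metric.mem_ball, Real.dist_eq, sub_zero] at hb
    have h1 : a N / N ≤ |a N / N| := le_abs_self _
    have h2 : a N / N * M < c/2/M * M := by
      apply mul_lt_mul_of_pos_right (lt_of_le_of_lt h1 hb) hM0
    have h3 : c/2/M * M = c/2 := by field_simp
    linarith
  -- the per-N estimates
  have hmain : ∀ N : ℕ, 1 ≤ N → a N / N * M ≤ c/2 →
      MemLp (fun ω => ((N:ℝ)/(a N)^2) * R N ω) 2 P ∧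
      |(∫ ω, ((N:ℝ)/(a N)^2) * R N ω ∂P) + (1/2) * ((∑ i ∈ Finset.range N,
          (g (i/N)^2/(φ (i/N)*(1-φ (i/N))))) / N)| ≤ 5*M^3/c^3 * (a N/N) ∧
      variance (fun ω => ((N:ℝ)/(a N)^2) * R N ω) P ≤ 16*M^2/c^2 * ((N:ℝ)/(a N)^2) := by
    intro N hN1 hN2
    exact main_estimates P c M hc hc2 hM φ g hcφ hMg N hN1 (a N) (ha N) hN2
      (η N) (hmeas N) (hval N) (hind N) (hmarg N)
      (fun ω => ((N:ℝ)/(a N)^2) * R N ω)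
      (fun ω => by simp only [hR N ω])
  -- convergence of the means
  set m : ℕ → ℝ := fun N => ∫ ω, ((N:ℝ)/(a N)^2) * R N ω ∂P with hm_def
  set S : ℕ → ℝ := fun N =>
    (∑ i ∈ Finset.range N, (g ((i:ℝ)/(N:ℝ))^2/(φ ((i:ℝ)/(N:ℝ))*(1-φ ((i:ℝ)/(N:ℝ)))))) / (N:ℝ)
    with hS_def
  have hmt : Tendsto m atTop (nhds (-(1/2) * I)) := by
    have hS2 : Tendsto (fun N => (1/2) * S N) atTop (nhds ((1/2)*I)) := hRiem.const_mul (1/2)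
    have herrb : Tendsto (fun N : ℕ => 5*M^3/c^3 * (a N/N)) atTop (nhds 0) := by
      have := ha1.const_mul (5*M^3/c^3)
      rwa [mul_zero] at this
    have herr : Tendsto (fun N => m N + (1/2) * S N) atTop (nhds 0) := by
      apply squeeze_zero_norm' ?_ herrb
      filter_upwards [hreg] with N hN
      rw [Real.norm_eq_abs]
      exact (hmain N hN.1 hN.2).2.1
    have := herr.sub hS2
    rw [zero_sub] at this
    have heq : (fun N => (m N + (1/2) * S N) - (1/2) * S N) = m := by
      funext N; ring
    rw [heq] at this
    have heq2 : -((1/2) * I) = -(1/2) * I := by ring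
    rwa [heq2] at this
  have hdist : ∀ᶠ N in atTop, |m N - (-(1/2) * I)| < ε/2 := by
    have := Metric.tendsto_nhds.mp hmt (ε/2) (by linarith)
    filter_upwards [this] with N hN
    rwa [Real.dist_eq] at hN
  -- probability bound
  have hup : ∀ᶠ N : ℕ in atTop,
      P {ω | ε ≤ |((N : ℝ) / (a N) ^ 2) * R N ω - (-(1 / 2) * I)|}
        ≤ ENNReal.ofReal (16*M^2/c^2 * ((Real.sqrt N/a N)^2) / (ε/2)^2) := by
    filter_upwards [hreg, hdist] with N hN hd
    obtain ⟨hmem, _, hvar⟩ := hmain N hN.1 hN.2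
    have hNpos : (0:ℝ) < N := by exact_mod_cast hN.1
    have hsq : (Real.sqrt N/a N)^2 = (N:ℝ)/(a N)^2 := by
      rw [div_pow, Real.sq_sqrt (le_of_lt hNpos)]
    have hsub : {ω | ε ≤ |((N : ℝ) / (a N) ^ 2) * R N ω - (-(1 / 2) * I)|}
        ⊆ {ω | ε/2 ≤ |((N : ℝ) / (a N) ^ 2) * R N ω - m N|} := by
      intro ω hω
      simp only [Set.mem_setOf_eq] at hω ⊢
      have htri : |((N : ℝ) / (a N) ^ 2) * R N ω - (-(1 / 2) * I)|
          ≤ |((N : ℝ) / (a N) ^ 2) * R N ω - m N| + |m N - (-(1 / 2) * I)| :=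
        abs_sub_le _ _ _
      linarith
    calc P {ω | ε ≤ |((N : ℝ) / (a N) ^ 2) * R N ω - (-(1 / 2) * I)|}
        ≤ P {ω | ε/2 ≤ |((N : ℝ) / (a N) ^ 2) * R N ω - m N|} := measure_mono hsub
      _ ≤ ENNReal.ofReal (variance (fun ω => ((N:ℝ)/(a N)^2) * R N ω) P / (ε/2)^2) :=
          meas_ge_le_variance_div_sq hmem (by linarith)
      _ ≤ ENNReal.ofReal (16*M^2/c^2 * ((Real.sqrt N/a N)^2) / (ε/2)^2) := by
          apply ENNReal.ofReal_le_ofReal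
          rw [hsq]
          apply div_le_div_of_nonneg_right hvar -- wrong name probably
          positivity
  -- squeeze
  have hupper : Tendsto (fun N : ℕ =>
      ENNReal.ofReal (16*M^2/c^2 * ((Real.sqrt N/a N)^2) / (ε/2)^2)) atTop (nhds 0) := by
    have h0 : Tendsto (fun N : ℕ => (Real.sqrt N/a N)^2) atTop (nhds 0) := by
      have := ha2.mul ha2
      rw [mul_zero] at this
      simpa only [← pow_two] using this
    have h1 : Tendsto (fun N : ℕ => 16*M^2/c^2 * ((Real.sqrt N/a N)^2) / (ε/2)^2) atTop
        (nhds 0) := by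
      have := (h0.const_mul (16*M^2/c^2)).div_const ((ε/2)^2)
      rwa [mul_zero, zero_div] at this
    have := ENNReal.tendsto_ofReal h1
    rwa [ENNReal.ofReal_zero] at this
  exact tendsto_of_tendsto_of_tendsto_of_le_of_le' tendsto_const_nhds hupper
    (Eventually.of_forall fun N => zero_le) hup
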